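/- If an LTL specification φ is (V, H, C, G)-realizable by a TGE with n states and environment memory k, then φ is (I, O)-realizable in the full-visibility setting by an ordinary transducer with n·k states, obtained as the product of the TGE's state space with the environment memory. -/

import Mathlib

/-- LTL formulas over atomic propositions of type `α`. -/
inductive LTL (α : Type) : Type where
  | tt : LTL α
  | ff : LTL α
  | atom : α → LTL α
  | not : LTL α → LTL α
  | and : LTL α → LTL α → LTL α
  | or : LTL α → LTL α → LTL α
  | next : LTL α → LTL α
  | untl : LTL α → LTL α → LTL α

namespace LTL

variable {α β : Type}

/-- Satisfaction of an LTL formula at position `j` of an infinite word. -/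
def satAt (w : ℕ → Set α) : ℕ → LTL α → Prop
  | _, .tt => True
  | _, .ff => False
  | j, .atom a => a ∈ w j
  | j, .not φ => ¬ satAt w j φ
  | j, .and φ ψ => satAt w j φ ∧ satAt w j ψ
  | j, .or φ ψ => satAt w j φ ∨ satAt w j ψ
  | j, .next φ => satAt w (j+1) φ
  | j, .untl φ ψ => ∃ k, j ≤ k ∧ satAt w k ψ ∧ ∀ l, j ≤ l → l < k → satAt w l φ

/-- A word satisfies a formula if it satisfies it at position 0. -/
def sat (w : ℕ → Set α) (φ : LTL α) : Prop := satAt w 0 φ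

/-- Eventually. -/
def F (φ : LTL α) : LTL α := untl tt φ
/-- Always. -/
def G (φ : LTL α) : LTL α := not (F (not φ))
/-- Boolean equivalence. -/
def iff_ (φ ψ : LTL α) : LTL α := or (and φ ψ) (and (not φ) (not ψ))
/-- `Xpow k φ` is `X^k φ`. -/
def Xpow : ℕ → LTL α → LTL α
  | 0, φ => φ
  | k+1, φ => next (Xpow k φ)
/-- `Fpow k φ` is `F^{k+1} φ`: "`φ` holds in at least `k+1` positions".
    (`F^1 p = F p`, `F^{j+1} p = F (p ∧ X (F^j p))`.) -/
def Fpow : ℕ → LTL α → LTL α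
  | 0, φ => F φ
  | k+1, φ => F (and φ (next (Fpow k φ)))

/-- Relabeling of atoms. -/
def map (f : α → β) : LTL α → LTL β
  | .tt => .tt
  | .ff => .ff
  | .atom a => .atom (f a)
  | .not φ => .not (map f φ)
  | .and φ ψ => .and (map f φ) (map f ψ)
  | .or φ ψ => .or (map f φ) (map f ψ)
  | .next φ => .next (map f φ)
  | .untl φ ψ => .untl (map f φ) (map f ψ)

/-- A formula is temporal-operator free (propositional). -/
def temporalFree : LTL α → Bool
  | .tt => true
  | .ff => true
  | .atom _ => true
  | .not φ => temporalFree φ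
  | .and φ ψ => temporalFree φ && temporalFree ψ
  | .or φ ψ => temporalFree φ && temporalFree ψ
  | .next _ => false
  | .untl _ _ => false

/-- `props ψ`: the maximal propositional subformulas of `ψ`. -/
def props : LTL α → List (LTL α)
  | .tt => [.tt]
  | .ff => [.ff]
  | .atom a => [.atom a]
  | .not φ => if temporalFree (LTL.not φ) then [.not φ] else props φ
  | .and φ ψ => if temporalFree (LTL.and φ ψ) then [.and φ ψ] else props φ ++ props ψ
  | .or φ ψ => if temporalFree (LTL.or φ ψ) then [.or φ ψ] else props φ ++ props ψ
  | .next φ => props φ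
  | .untl φ ψ => props φ ++ props ψ

/-- All atoms of the formula satisfy predicate `p`. -/
def atomsAll (p : α → Bool) : LTL α → Bool
  | .tt => true
  | .ff => true
  | .atom a => p a
  | .not φ => atomsAll p φ
  | .and φ ψ => atomsAll p φ && atomsAll p ψ
  | .or φ ψ => atomsAll p φ && atomsAll p ψ
  | .next φ => atomsAll p φ
  | .untl φ ψ => atomsAll p φ && atomsAll p ψ

/-- Maximal subformulas all of whose atoms satisfy `p` (used for `cl_H`). -/
def clP (p : α → Bool) : LTL α → List (LTL α)
  | .tt => []
  | .ff => []
  | .atom a => if p a then [.atom a] else []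
  | .not φ => if atomsAll p (LTL.not φ) then [.not φ] else clP p φ
  | .and φ ψ => if atomsAll p (LTL.and φ ψ) then [.and φ ψ] else clP p φ ++ clP p ψ
  | .or φ ψ => if atomsAll p (LTL.or φ ψ) then [.or φ ψ] else clP p φ ++ clP p ψ
  | .next φ => clP p φ
  | .untl φ ψ => clP p φ ++ clP p ψ

/-- `clH p φ`: maximal subformulas of formulas in `props φ` all of whose atoms
    satisfy `p` (i.e. are hidden signals). -/
def clH (p : α → Bool) (φ : LTL α) : List (LTL α) :=
  (props φ).foldr (fun ψ acc => clP p ψ ++ acc) []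

/-- Propositional satisfaction of a formula by a single assignment. -/
def propSat (σ : Set α) (φ : LTL α) : Prop := satAt (fun _ => σ) 0 φ

end LTL

/-- A (full-visibility) finite-state transducer with inputs `ι`, outputs `o`
    and states `S`. -/
structure Transducer (ι o S : Type) where
  init : S
  trans : S → Set ι → S
  out : S → Set ι → Set o

namespace Transducer

variable {ι o S : Type}

/-- The run of a transducer on an input word. -/
def run (T : Transducer ι o S) (wI : ℕ → Set ι) : ℕ → S
  | 0 => T.init
  | j+1 => T.trans (run T wI j) (wI j)

/-- The computation of a transducer on an input word, as a word over `2^{I ∪ O}`. -/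
def comp (T : Transducer ι o S) (wI : ℕ → Set ι) (j : ℕ) : Set (ι ⊕ o) :=
  Sum.inl '' wI j ∪ Sum.inr '' T.out (T.run wI j) (wI j)

/-- `(I,O)`-realizability. -/
def Realizes (T : Transducer ι o S) (φ : LTL (ι ⊕ o)) : Prop :=
  ∀ wI, LTL.sat (T.comp wI) φ

end Transducer

/-- A transducer with a guided environment (TGE): visible inputs `ν`, hidden
    inputs `η`, controlled outputs `γc`, guided outputs `γg`, states `S`,
    environment memory `M`.  Each transition emits an assignment to the
    controlled outputs together with a program `M × 2^H → M × 2^G`. -/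
structure TGE (ν η γc γg S M : Type) where
  init : S
  m0 : M
  trans : S → Set ν → S
  out : S → Set ν → Set γc × (M → Set η → M × Set γg)

namespace TGE

variable {ν η γc γg S M : Type}

/-- The run of a TGE depends only on the visible inputs. -/
def run (T : TGE ν η γc γg S M) (wV : ℕ → Set ν) : ℕ → S
  | 0 => T.init
  | j+1 => T.trans (run T wV j) (wV j)

/-- The environment's memory sequence, obtained by iterating the emitted
    programs on the hidden inputs. -/
def mem (T : TGE ν η γc γg S M) (wV : ℕ → Set ν) (wH : ℕ → Set η) : ℕ → M
  | 0 => T.m0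
  | j+1 => ((T.out (T.run wV j) (wV j)).2 (mem T wV wH j) (wH j)).1

/-- The guided output at step `j`. -/
def guided (T : TGE ν η γc γg S M) (wV : ℕ → Set ν) (wH : ℕ → Set η) (j : ℕ) :
    Set γg :=
  ((T.out (T.run wV j) (wV j)).2 (T.mem wV wH j) (wH j)).2

/-- The computation of a TGE, over `2^{(V ∪ H) ∪ (C ∪ G)}`. -/
def comp (T : TGE ν η γc γg S M) (wV : ℕ → Set ν) (wH : ℕ → Set η) (j : ℕ) :
    Set ((ν ⊕ η) ⊕ (γc ⊕ γg)) :=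
  Sum.inl '' (Sum.inl '' wV j ∪ Sum.inr '' wH j) ∪
    Sum.inr '' (Sum.inl '' (T.out (T.run wV j) (wV j)).1 ∪
                 Sum.inr '' T.guided wV wH j)

/-- `(V,H,C,G)`-realizability of an LTL specification. -/
def Realizes (T : TGE ν η γc γg S M) (φ : LTL ((ν ⊕ η) ⊕ (γc ⊕ γg))) : Prop :=
  ∀ wV wH, LTL.sat (T.comp wV wH) φ

/-- `(V,H,C,G)`-realizability of an arbitrary language. -/
def RealizesL (T : TGE ν η γc γg S M)
    (L : Set (ℕ → Set ((ν ⊕ η) ⊕ (γc ⊕ γg)))) : Prop :=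
  ∀ wV wH, T.comp wV wH ∈ L

end TGE

/-- If `φ` is `(V,H,C,G)`-realizable by a TGE with states `S` and
environment memory `M`, then `φ` is `(I,O)`-realizable (full visibility) by an
ordinary transducer with state space `S × M`. -/
theorem stmt1 {ν η γc γg S M : Type} (φ : LTL ((ν ⊕ η) ⊕ (γc ⊕ γg)))
    (T : TGE ν η γc γg S M) (h : T.Realizes φ) :
    ∃ Tr : Transducer (ν ⊕ η) (γc ⊕ γg) (S × M), Tr.Realizes φ := by
  classical
  let pV : Set (ν ⊕ η) → Set ν := fun σ => {v | Sum.inl v ∈ σ}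
  let pH : Set (ν ⊕ η) → Set η := fun σ => {e | Sum.inr e ∈ σ}
  let Tr : Transducer (ν ⊕ η) (γc ⊕ γg) (S × M) :=
    { init := (T.init, T.m0),
      trans := fun p σ => (T.trans p.1 (pV σ),
        ((T.out p.1 (pV σ)).2 p.2 (pH σ)).1),
      out := fun p σ => Sum.inl '' (T.out p.1 (pV σ)).1 ∪
        Sum.inr '' ((T.out p.1 (pV σ)).2 p.2 (pH σ)).2 }
  refine ⟨Tr, ?_⟩
  intro wI
  set wV : ℕ → Set ν := fun j => pV (wI j) with hwV
  set wH : ℕ → Set η := fun j => pH (wI j) with hwH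
  have hrun : ∀ j, Tr.run wI j = (T.run wV j, T.mem wV wH j) := by
    intro j
    induction j with
    | zero => rfl
    | succ j ih =>
      simp [Transducer.run, TGE.run, TGE.mem, ih]
      rfl
  have hcomp : Tr.comp wI = T.comp wV wH := by
    funext j
    have hsplit : wI j = Sum.inl '' wV j ∪ Sum.inr '' wH j := by
      ext x
      cases x with
      | inl v => simp [wV, pV]
      | inr e => simp [wH, pH]
    simp only [Transducer.comp, TGE.comp, hrun j, TGE.guided]
    rw [hsplit]
    have h1 : pV (Sum.inl '' wV j ∪ Sum.inr '' wH j) = wV j := by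
      ext v; simp [pV]
    have h2 : pH (Sum.inl '' wV j ∪ Sum.inr '' wH j) = wH j := by
      ext e; simp [pH]
    simp only [Tr]
    rw [h1, h2]
  unfold LTL.sat
  rw [hcomp]
  exact h wV wH
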